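/- Let q be a power of an odd prime. A projectivity g ∈ PGL(3, 𝔽_{q²}) maps the Hermitian curve 𝓗_q onto itself and fixes both the point P₀ = (0:0:1) and the line ℓ : Z = 0 if and only if g is induced by a (necessarily unique) matrix of the form [[a,b,0],[c,d,0],[0,0,1]] with entries in 𝔽_{q²} satisfying ac^q − a^q c = 0, bd^q − b^q d = 0, bc^q − a^q d = −1 and ad^q − b^q c = 1. In particular, the set 𝓜 of all such matrices is a subgroup of GL(3, 𝔽_{q²}). -/

import Mathlib

/-- The Hermitian polynomial `X Y^q - Y X^q + ω Z^(q+1)` evaluated at a vector. -/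
def hermEval (q : ℕ) {K : Type} [Field K] (ω : K) (v : Fin 3 → K) : K :=
  v 0 * v 1 ^ q - v 1 * v 0 ^ q + ω * v 2 ^ (q + 1)

/-- The action of a matrix with entries in `F` on vectors over an extension `K`. -/
def applyMat {F K : Type} [Field F] [Field K] [Algebra F K]
    (g : Matrix (Fin 3) (Fin 3) F) (v : Fin 3 → K) : Fin 3 → K :=
  (g.map (algebraMap F K)).mulVec v

/- ### Auxiliary lemmas -/

theorem stmt0_charF (F : Type) [Field F] [Fintype F] (p h : ℕ) (hp : p.Prime) (hh : 1 ≤ h)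
    (hF : Fintype.card F = (p ^ h) ^ 2) : CharP F p := by
  haveI : CharP F (ringChar F) := ringChar.charP F
  obtain ⟨n, hrp, hcard⟩ := FiniteField.card F (ringChar F)
  have hdvd : p ∣ ringChar F ^ (n : ℕ) := by
    rw [← hcard, hF, ← pow_mul]
    exact dvd_pow_self p (by positivity)
  have hdp := Nat.Prime.dvd_of_dvd_pow hp hdvd
  have hpe : p = ringChar F := (Nat.prime_dvd_prime_iff_eq hp hrp).mp hdp
  exact hpe ▸ ‹CharP F (ringChar F)›

theorem stmt0_exroot (K : Type) [Field K] [IsAlgClosed K] (q : ℕ) (hq : 2 ≤ q) (s : K) :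
    ∃ y : K, y ^ q - y = s := by
  have h1 : (Polynomial.X ^ q - Polynomial.X - Polynomial.C s : Polynomial K).degree = q := by
    compute_degree!
    · have h1q : ¬ (1 = q) := by omega
      have h0q : ¬ (q = 0) := by omega
      simp [h1q, h0q]
    · have : (1 : WithBot ℕ) ≤ (q : WithBot ℕ) := by exact_mod_cast (by omega : 1 ≤ q)
      exact sup_eq_left.mpr this
  have hdeg : (Polynomial.X ^ q - Polynomial.X - Polynomial.C s : Polynomial K).degree ≠ 0 := by
    rw [h1]; exact_mod_cast (by omega : q ≠ 0)
  obtain ⟨y, hy⟩ := IsAlgClosed.exists_root _ hdeg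
  refine ⟨y, ?_⟩
  have h0 : y ^ q - y - s = 0 := by simpa using hy
  linear_combination h0

theorem stmt0_closure_aux {F : Type} [Field F] (q : ℕ)
    (hadd : ∀ x y : F, (x + y) ^ q = x ^ q + y ^ q)
    (a b c d a' b' c' d' : F)
    (h1 : a * c ^ q - a ^ q * c = 0) (h2 : b * d ^ q - b ^ q * d = 0)
    (h3 : b * c ^ q - a ^ q * d = -1) (h4 : a * d ^ q - b ^ q * c = 1)
    (h1' : a' * c' ^ q - a' ^ q * c' = 0) (h2' : b' * d' ^ q - b' ^ q * d' = 0)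
    (h3' : b' * c' ^ q - a' ^ q * d' = -1) (h4' : a' * d' ^ q - b' ^ q * c' = 1) :
    (a*a'+b*c') * (c*a'+d*c') ^ q - (a*a'+b*c') ^ q * (c*a'+d*c') = 0 ∧
    (a*b'+b*d') * (c*b'+d*d') ^ q - (a*b'+b*d') ^ q * (c*b'+d*d') = 0 ∧
    (a*b'+b*d') * (c*a'+d*c') ^ q - (a*a'+b*c') ^ q * (c*b'+d*d') = -1 ∧
    (a*a'+b*c') * (c*b'+d*d') ^ q - (a*b'+b*d') ^ q * (c*a'+d*c') = 1 := by
  have hexp : ∀ x y z w : F, (x*y + z*w)^q = x^q*y^q + z^q*w^q := by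
    intro x y z w; rw [hadd, mul_pow, mul_pow]
  refine ⟨?_, ?_, ?_, ?_⟩
  · rw [hexp, hexp]
    linear_combination (a'*a'^q) * h1 + (c'*c'^q) * h2 + (a'*c'^q) * h4 + (a'^q*c') * h3 + h1'
  · rw [hexp, hexp]
    linear_combination (b'*b'^q) * h1 + (d'*d'^q) * h2 + (b'*d'^q) * h4 + (b'^q*d') * h3 + h2'
  · rw [hexp, hexp]
    linear_combination (a'^q*b') * h1 + (c'^q*d') * h2 + (b'*c'^q) * h4 + (a'^q*d') * h3 + h3'
  · rw [hexp, hexp]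
    linear_combination (a'*b'^q) * h1 + (c'*d'^q) * h2 + (a'*d'^q) * h4 + (b'^q*c') * h3 + h4'

theorem stmt0_inv_aux {F : Type} [Field F] (q : ℕ) (hq0 : q ≠ 0)
    (hsub : ∀ x y : F, (x - y) ^ q = x ^ q - y ^ q)
    (hcard : ∀ x : F, (x ^ q) ^ q = x)
    (a b c d : F)
    (h1 : a * c ^ q - a ^ q * c = 0) (h2 : b * d ^ q - b ^ q * d = 0)
    (h3 : b * c ^ q - a ^ q * d = -1) (h4 : a * d ^ q - b ^ q * c = 1) :
    (d^q * (-c^q) ^ q - (d^q) ^ q * (-c^q) = 0 ∧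
     (-b^q) * (a^q) ^ q - (-b^q) ^ q * (a^q) = 0 ∧
     (-b^q) * (-c^q) ^ q - (d^q) ^ q * (a^q) = -1 ∧
     d^q * (a^q) ^ q - (-b^q) ^ q * (-c^q) = 1) ∧
    (a * d^q + b * (-c^q) = 1 ∧ a * (-b^q) + b * a^q = 0 ∧
     c * d^q + d * (-c^q) = 0 ∧ c * (-b^q) + d * a^q = 1) ∧
    (a * d - b * c) * (a * d - b * c) ^ q = 1 := by
  have hneg : ∀ x : F, (-x) ^ q = -(x ^ q) := by
    intro x
    have := hsub 0 x
    simpa [zero_pow hq0] using this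
  set D := a * d - b * c with hD
  have hDq : D ^ q = a^q * d^q - b^q * c^q := by
    rw [hD, hsub, mul_pow, mul_pow]
  have ea : a * D ^ q = a ^ q := by rw [hDq]; linear_combination a^q * h4 - b^q * h1
  have eb : b * D ^ q = b ^ q := by rw [hDq]; linear_combination a^q * h2 - b^q * h3
  have ec : c * D ^ q = c ^ q := by rw [hDq]; linear_combination c^q * h4 - d^q * h1
  have ed : d * D ^ q = d ^ q := by rw [hDq]; linear_combination c^q * h2 - d^q * h3
  have h4q : a^q * d - b * c^q = 1 := by
    have := congrArg (fun x : F => x ^ q) h4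
    rw [hsub, mul_pow, mul_pow, hcard, hcard, one_pow] at this
    exact this
  have hD1 : D * D ^ q = 1 := by
    linear_combination d * ea - b * ec + h4q
  refine ⟨⟨?_, ?_, ?_, ?_⟩, ⟨?_, ?_, ?_, ?_⟩, hD1⟩
  · rw [hneg, hcard, hcard]; linear_combination c * ed - d * ec
  · rw [hneg, hcard, hcard]; linear_combination a * eb - b * ea
  · rw [hneg, hcard, hcard]; linear_combination d * ea - c * eb - hD1
  · rw [hneg, hcard, hcard]; linear_combination b * ec - a * ed + hD1
  · linear_combination b * ec - a * ed + hD1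
  · linear_combination a * eb - b * ea
  · linear_combination d * ec - c * ed
  · linear_combination c * eb - d * ea + hD1

theorem stmt0_one_mat {F : Type} [Field F] :
    (1 : Matrix (Fin 3) (Fin 3) F) = !![1,0,0;0,1,0;0,0,1] := by
  ext i j
  fin_cases i <;> fin_cases j <;> simp [Matrix.one_apply] <;> rfl

/-- Let `q` be a power of an odd prime.  A projectivity
`g ∈ PGL(3,𝔽_{q²})` maps the Hermitian curve `𝓗_q : X Y^q - Y X^q + ω Z^(q+1) = 0`
onto itself and fixes both `P₀ = (0:0:1)` and the line `ℓ : Z = 0` if and only if it is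
induced by a (necessarily unique) matrix `[[a,b,0],[c,d,0],[0,0,1]]` with
`a c^q - a^q c = 0`, `b d^q - b^q d = 0`, `b c^q - a^q d = -1`, `a d^q - b^q c = 1`.
In particular the set `𝓜` of all such matrices is a subgroup of `GL(3,𝔽_{q²})`. -/
theorem stmt_0 (p : ℕ) (hp : p.Prime) (hodd : p ≠ 2) (h : ℕ) (hh : 1 ≤ h)
    (q : ℕ) (hq : q = p ^ h)
    (F : Type) [Field F] [Fintype F] (hF : Fintype.card F = q ^ 2)
    (K : Type) [Field K] [IsAlgClosed K] [Algebra F K]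
    (ω : F) (hω : ω ^ (q - 1) = -1)
    (Mset : Set (Matrix (Fin 3) (Fin 3) F))
    (hMset : ∀ M, M ∈ Mset ↔ ∃ a b c d : F,
      M = !![a, b, 0; c, d, 0; 0, 0, 1] ∧
      a * c ^ q - a ^ q * c = 0 ∧ b * d ^ q - b ^ q * d = 0 ∧
      b * c ^ q - a ^ q * d = -1 ∧ a * d ^ q - b ^ q * c = 1) :
    -- a projectivity (an invertible matrix, taken up to scalars) preserves the curve
    -- and fixes the point `P₀` and the line `ℓ` iff it is induced by a unique matrix in `𝓜`
    (∀ g : Matrix (Fin 3) (Fin 3) F, IsUnit g.det →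
      (((∀ v : Fin 3 → K, v ≠ 0 →
            (hermEval q (algebraMap F K ω) v = 0 ↔ hermEval q (algebraMap F K ω) (applyMat g v) = 0)) ∧
          (∃ c : F, c ≠ 0 ∧ g.mulVec ![0, 0, 1] = c • ![0, 0, 1]) ∧
          (∀ v : Fin 3 → K, v ≠ 0 → v 2 = 0 → applyMat g v 2 = 0)) ↔
        (∃! M, M ∈ Mset ∧ ∃ c : F, c ≠ 0 ∧ g = c • M))) ∧
    -- `𝓜` is a subgroup of `GL(3, 𝔽_{q²})`
    ((1 : Matrix (Fin 3) (Fin 3) F) ∈ Mset ∧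
      (∀ M N, M ∈ Mset → N ∈ Mset → M * N ∈ Mset) ∧
      (∀ M ∈ Mset, IsUnit M.det) ∧
      (∀ M ∈ Mset, ∃ N ∈ Mset, M * N = 1 ∧ N * M = 1)) := by
  haveI : Fact p.Prime := ⟨hp⟩
  haveI charF : CharP F p := stmt0_charF F p h hp hh (hq ▸ hF)
  have hq0 : q ≠ 0 := by rw [hq]; exact (pow_pos hp.pos h).ne'
  have hq2 : 2 ≤ q := by
    rw [hq]
    calc 2 ≤ p := hp.two_le
    _ = p ^ 1 := (pow_one p).symm
    _ ≤ p ^ h := Nat.pow_le_pow_right hp.pos hh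
  have inj : Function.Injective (algebraMap F K) := (algebraMap F K).injective
  haveI charK : CharP K p := charP_of_injective_algebraMap inj p
  have haddF : ∀ x y : F, (x + y) ^ q = x ^ q + y ^ q := by
    intro x y; rw [hq]; exact add_pow_char_pow ..
  have hsubF : ∀ x y : F, (x - y) ^ q = x ^ q - y ^ q := by
    intro x y; rw [hq]; exact sub_pow_char_pow ..
  have haddK : ∀ x y : K, (x + y) ^ q = x ^ q + y ^ q := by
    intro x y; rw [hq]; exact add_pow_char_pow ..
  have hcardF : ∀ x : F, (x ^ q) ^ q = x := by
    intro x
    rw [← pow_mul]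
    have hqq : q * q = Fintype.card F := by rw [hF]; ring
    rw [hqq]
    exact FiniteField.pow_card x
  have hω0 : ω ≠ 0 := by
    intro hc
    rw [hc, zero_pow (by omega : q - 1 ≠ 0)] at hω
    exact one_ne_zero (neg_eq_zero.mp hω.symm)
  set f := algebraMap F K with hf
  have hfω0 : f ω ≠ 0 := fun hc => hω0 (inj (by rw [hc, map_zero]))
  constructor
  · -- the main equivalence
    intro g hdet
    constructor
    · -- forward direction
      rintro ⟨hcurve, ⟨e, he, hP⟩, hline⟩
      -- evaluate applyMat on explicit vectors
      have happ2 : ∀ x y z : K, applyMat g ![x, y, z] 2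
          = f (g 2 0) * x + f (g 2 1) * y + f (g 2 2) * z := by
        intro x y z
        simp [applyMat, Matrix.mulVec, dotProduct, Fin.sum_univ_three, Matrix.map_apply,
          Matrix.vecHead, Matrix.vecTail, hf]
      have hvne : ∀ (x y z : K) (i : Fin 3), (![x, y, z]) i ≠ 0 → ![x, y, z] ≠ 0 := by
        intro x y z i hi hc
        exact hi (by rw [hc]; rfl)
      -- shape of g from fixing the line and the point
      have h20 : g 2 0 = 0 := by
        have := hline ![1, 0, 0] (hvne 1 0 0 0 (by norm_num)) rfl
        rw [happ2] at this
        simpa using this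
      have h21 : g 2 1 = 0 := by
        have := hline ![0, 1, 0] (hvne 0 1 0 1 (by norm_num)) rfl
        rw [happ2] at this
        simpa using this
      have hmv : ∀ i : Fin 3, g.mulVec ![0, 0, 1] i = g i 2 := by
        intro i
        simp [Matrix.mulVec, dotProduct, Fin.sum_univ_three, Matrix.vecHead, Matrix.vecTail]
      have h02 : g 0 2 = 0 := by
        have := congrFun hP 0; rw [hmv] at this; simpa using this
      have h12 : g 1 2 = 0 := by
        have := congrFun hP 1; rw [hmv] at this; simpa using this
      have h22 : g 2 2 = e := by
        have := congrFun hP 2; rw [hmv] at this; simpa using this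
      set A := g 0 0 with hA
      set B := g 0 1 with hB
      set C := g 1 0 with hC
      set D := g 1 1 with hD
      have happ : ∀ x y z : K, applyMat g ![x, y, z]
          = ![f A * x + f B * y, f C * x + f D * y, f e * z] := by
        intro x y z
        funext i
        fin_cases i <;>
          simp [applyMat, Matrix.mulVec, dotProduct, Fin.sum_univ_three, Matrix.map_apply,
            Matrix.vecHead, Matrix.vecTail, h20, h21, h02, h12, h22, hA, hB, hC, hD, hf]
      have hexpK : ∀ s t u : K, (s + t * u) ^ q = s ^ q + t ^ q * u ^ q := by
        intro s t u; rw [haddK, mul_pow]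
      -- condition from (1 : 0 : 0)
      have hα : A * C ^ q - A ^ q * C = 0 := by
        have h0 : hermEval q (f ω) ![(1:K), 0, 0] = 0 := by
          simp [hermEval, zero_pow hq0]
        have := (hcurve ![1, 0, 0] (hvne 1 0 0 0 (by norm_num)) ).mp h0
        rw [happ] at this
        simp only [hermEval, Matrix.cons_val_zero, Matrix.cons_val_one, Matrix.head_cons,
          Matrix.cons_val_two, Matrix.tail_cons, mul_zero, zero_pow hq0, add_zero,
          mul_one, one_mul] at this
        apply inj
        rw [map_sub, map_mul, map_mul, map_pow, map_pow, map_zero]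
        linear_combination this
      have hβ : B * D ^ q - B ^ q * D = 0 := by
        have h0 : hermEval q (f ω) ![(0:K), 1, 0] = 0 := by
          simp [hermEval, zero_pow hq0]
        have := (hcurve ![0, 1, 0] (hvne 0 1 0 1 (by norm_num))).mp h0
        rw [happ] at this
        simp only [hermEval, Matrix.cons_val_zero, Matrix.cons_val_one, Matrix.head_cons,
          Matrix.cons_val_two, Matrix.tail_cons, mul_zero, zero_pow hq0, add_zero,
          mul_one, one_mul] at this
        apply inj
        rw [map_sub, map_mul, map_mul, map_pow, map_pow, map_zero]
        linear_combination this
      -- K-versions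
      have hαK : f A * (f C) ^ q - (f A) ^ q * f C = 0 := by
        have := congrArg f hα
        rw [map_sub, map_mul, map_mul, map_pow, map_pow, map_zero] at this
        exact this
      have hβK : f B * (f D) ^ q - (f B) ^ q * f D = 0 := by
        have := congrArg f hβ
        rw [map_sub, map_mul, map_mul, map_pow, map_pow, map_zero] at this
        exact this
      -- condition from (1 : 1 : 0)
      have hsumK : (f A * (f D) ^ q - (f B) ^ q * f C) + (f B * (f C) ^ q - (f A) ^ q * f D) = 0 := by
        have h0 : hermEval q (f ω) ![(1:K), 1, 0] = 0 := by
          simp [hermEval, zero_pow hq0]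
        have hE := (hcurve ![1, 1, 0] (hvne 1 1 0 0 (by norm_num))).mp h0
        rw [happ] at hE
        simp only [hermEval, Matrix.cons_val_zero, Matrix.cons_val_one, Matrix.head_cons,
          Matrix.cons_val_two, Matrix.tail_cons, mul_zero, zero_pow hq0, add_zero,
          mul_one, one_mul] at hE
        rw [haddK, haddK] at hE
        linear_combination hE - hαK - hβK
      -- condition from (1 : y₀ : 1) with y₀^q - y₀ = -ω
      obtain ⟨y₀, hy₀⟩ := stmt0_exroot K q hq2 (-(f ω))
      have hγK : f A * (f D) ^ q - (f B) ^ q * f C = (f e) ^ (q + 1) := by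
        have h0 : hermEval q (f ω) ![(1:K), y₀, 1] = 0 := by
          simp only [hermEval, Matrix.cons_val_zero, Matrix.cons_val_one, Matrix.head_cons,
            Matrix.cons_val_two, Matrix.tail_cons, one_pow, mul_one, one_mul]
          linear_combination hy₀
        have hE := (hcurve ![1, y₀, 1] (hvne 1 y₀ 1 0 (by norm_num))).mp h0
        rw [happ] at hE
        simp only [hermEval, Matrix.cons_val_zero, Matrix.cons_val_one, Matrix.head_cons,
          Matrix.cons_val_two, Matrix.tail_cons, mul_one, one_mul] at hE
        rw [hexpK, hexpK] at hE
        have hstep : f ω * ((f e) ^ (q+1) - (f A * (f D) ^ q - (f B) ^ q * f C)) = 0 := by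
          linear_combination hE - hαK - (y₀ * y₀ ^ q) * hβK - y₀ * hsumK
            - (f A * (f D) ^ q - (f B) ^ q * f C) * hy₀
        rcases mul_eq_zero.mp hstep with hc | hc
        · exact absurd hc hfω0
        · linear_combination -hc
      -- pull back to F
      have hγF : A * D ^ q - B ^ q * C = e ^ (q + 1) := by
        apply inj
        rw [map_sub, map_mul, map_mul, map_pow, map_pow, map_pow]
        exact hγK
      have hδF : B * C ^ q - A ^ q * D = -e ^ (q + 1) := by
        apply inj
        rw [map_sub, map_mul, map_mul, map_pow, map_pow, map_neg, map_pow]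
        have := congrArg f hγF
        rw [map_sub, map_mul, map_mul, map_pow, map_pow, map_pow] at this
        linear_combination hsumK - this
      have hαF : A * C ^ q - A ^ q * C = 0 := hα
      have hβF : B * D ^ q - B ^ q * D = 0 := hβ
      -- build the matrix M
      have hee1 : e ^ (q + 1) * (e⁻¹) ^ (q + 1) = 1 := by
        rw [← mul_pow, mul_inv_cancel₀ he, one_pow]
      refine ⟨!![A * e⁻¹, B * e⁻¹, 0; C * e⁻¹, D * e⁻¹, 0; 0, 0, 1], ⟨?_, e, he, ?_⟩, ?_⟩
      · rw [hMset]
        refine ⟨A * e⁻¹, B * e⁻¹, C * e⁻¹, D * e⁻¹, rfl, ?_, ?_, ?_, ?_⟩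
        · rw [mul_pow, mul_pow]
          linear_combination (e⁻¹ * (e⁻¹) ^ q) * hαF
        · rw [mul_pow, mul_pow]
          linear_combination (e⁻¹ * (e⁻¹) ^ q) * hβF
        · rw [mul_pow, mul_pow]
          linear_combination (e⁻¹ * (e⁻¹) ^ q) * hδF - hee1
        · rw [mul_pow, mul_pow]
          linear_combination (e⁻¹ * (e⁻¹) ^ q) * hγF + hee1
      · ext i j
        fin_cases i <;> fin_cases j <;>
          simp [Matrix.smul_apply, h20, h21, h02, h12, h22, hA, hB, hC, hD] <;>
          field_simp
      · rintro M' ⟨hM'mem, c', hc', hg'⟩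
        obtain ⟨a', b', c'', d', hM'eq, -⟩ := (hMset M').mp hM'mem
        have hce : c' = e := by
          have h1 := congrFun (congrFun hg' 2) 2
          rw [hM'eq] at h1
          simp [Matrix.smul_apply, h22] at h1
          exact h1.symm
        subst hce
        apply smul_right_injective (Matrix (Fin 3) (Fin 3) F) he
        show c' • M' = c' • _
        rw [← hg']
        ext i j
        fin_cases i <;> fin_cases j <;>
          simp [Matrix.smul_apply, h20, h21, h02, h12, h22, hA, hB, hC, hD] <;>
          field_simp
    · -- reverse direction
      rintro ⟨M, ⟨hMmem, c, hc, hgc⟩, -⟩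
      obtain ⟨a, b, c0, d, hMeq, h1, h2, h3, h4⟩ := (hMset M).mp hMmem
      subst hMeq
      subst hgc
      have hfc : f c ≠ 0 := fun hcc => hc (inj (by rw [hcc, map_zero]))
      have happ : ∀ v : Fin 3 → K, applyMat (c • !![a, b, 0; c0, d, 0; 0, 0, 1]) v
          = ![f c * (f a * v 0 + f b * v 1), f c * (f c0 * v 0 + f d * v 1), f c * v 2] := by
        intro v
        funext i
        fin_cases i <;>
          simp [applyMat, Matrix.mulVec, dotProduct, Fin.sum_univ_three, Matrix.map_apply,
            Matrix.vecHead, Matrix.vecTail, Matrix.smul_apply, map_mul, smul_eq_mul, hf] <;>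
          ring
      have hmapc : ∀ (x y : F) (hxy : x * y ^ q - x ^ q * y = 0),
          f x * (f y) ^ q - (f x) ^ q * f y = 0 := by
        intro x y hxy
        have := congrArg f hxy
        rwa [map_sub, map_mul, map_mul, map_pow, map_pow, map_zero] at this
      have H1 := hmapc a c0 h1
      have H2 := hmapc b d h2
      have H3 : f b * (f c0) ^ q - (f a) ^ q * f d = -1 := by
        have := congrArg f h3
        rwa [map_sub, map_mul, map_mul, map_pow, map_pow, map_neg, map_one] at this
      have H4 : f a * (f d) ^ q - (f b) ^ q * f c0 = 1 := by
        have := congrArg f h4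
        rwa [map_sub, map_mul, map_mul, map_pow, map_pow, map_one] at this
      have hexpK : ∀ s t u w : K, (s * t + u * w) ^ q = s ^ q * t ^ q + u ^ q * w ^ q := by
        intro s t u w; rw [haddK, mul_pow, mul_pow]
      refine ⟨?_, ⟨c, hc, ?_⟩, ?_⟩
      · intro v hv
        have hkey : hermEval q (f ω) (applyMat (c • !![a, b, 0; c0, d, 0; 0, 0, 1]) v)
            = (f c) ^ (q + 1) * hermEval q (f ω) v := by
          rw [happ]
          simp only [hermEval, Matrix.cons_val_zero, Matrix.cons_val_one, Matrix.head_cons,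
            Matrix.cons_val_two, Matrix.tail_cons]
          rw [mul_pow (f c), mul_pow (f c), mul_pow (f c), hexpK, hexpK]
          linear_combination ((f c) ^ (q + 1) * (v 0 * (v 0) ^ q)) * H1
            + ((f c) ^ (q + 1) * (v 1 * (v 1) ^ q)) * H2
            + ((f c) ^ (q + 1) * ((v 0) ^ q * v 1)) * H3
            + ((f c) ^ (q + 1) * (v 0 * (v 1) ^ q)) * H4
        rw [hkey]
        constructor
        · intro h0; rw [h0, mul_zero]
        · intro h0
          rcases mul_eq_zero.mp h0 with hcc | hcc
          · exact absurd hcc (pow_ne_zero _ hfc)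
          · exact hcc
      · funext i
        fin_cases i <;>
          simp [Matrix.mulVec, dotProduct, Fin.sum_univ_three, Matrix.vecHead,
            Matrix.vecTail, Matrix.smul_apply, smul_eq_mul]
      · intro v hv hv2
        have := congrFun (happ v) 2
        rw [this]
        simp [hv2]
  · -- the subgroup part
    refine ⟨?_, ?_, ?_, ?_⟩
    · rw [hMset]
      exact ⟨1, 0, 0, 1, by rw [stmt0_one_mat], by simp [zero_pow hq0]⟩
    · intro M N hM hN
      obtain ⟨a, b, c, d, hMeq, h1, h2, h3, h4⟩ := (hMset M).mp hM
      obtain ⟨a', b', c', d', hNeq, h1', h2', h3', h4'⟩ := (hMset N).mp hN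
      obtain ⟨H1, H2, H3, H4⟩ := stmt0_closure_aux q haddF a b c d a' b' c' d'
        h1 h2 h3 h4 h1' h2' h3' h4'
      rw [hMset]
      refine ⟨a*a'+b*c', a*b'+b*d', c*a'+d*c', c*b'+d*d', ?_, H1, H2, H3, H4⟩
      rw [hMeq, hNeq, Matrix.mul_fin_three]
      ring_nf
    · intro M hM
      obtain ⟨a, b, c, d, hMeq, h1, h2, h3, h4⟩ := (hMset M).mp hM
      obtain ⟨-, -, hD1⟩ := stmt0_inv_aux q hq0 hsubF hcardF a b c d h1 h2 h3 h4
      have hdet : M.det = a * d - b * c := by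
        rw [hMeq]; simp [Matrix.det_fin_three]
      rw [hdet]
      exact IsUnit.of_mul_eq_one _ hD1
    · intro M hM
      obtain ⟨a, b, c, d, hMeq, h1, h2, h3, h4⟩ := (hMset M).mp hM
      obtain ⟨⟨n1, n2, n3, n4⟩, ⟨e1, e2, e3, e4⟩, hD1⟩ :=
        stmt0_inv_aux q hq0 hsubF hcardF a b c d h1 h2 h3 h4
      refine ⟨!![d^q, -b^q, 0; -c^q, a^q, 0; 0, 0, 1], ?_, ?_, ?_⟩
      · rw [hMset]
        exact ⟨d^q, -b^q, -c^q, a^q, rfl, n1, n2, n3, n4⟩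
      · have hprod : M * !![d^q, -b^q, 0; -c^q, a^q, 0; 0, 0, 1]
            = !![a * d^q + b * (-c^q), a * (-b^q) + b * a^q, 0;
                 c * d^q + d * (-c^q), c * (-b^q) + d * a^q, 0; 0, 0, 1] := by
          rw [hMeq, Matrix.mul_fin_three]
          ring_nf
        rw [hprod, e1, e2, e3, e4, stmt0_one_mat]
      · rw [mul_eq_one_comm]
        have hprod : M * !![d^q, -b^q, 0; -c^q, a^q, 0; 0, 0, 1]
            = !![a * d^q + b * (-c^q), a * (-b^q) + b * a^q, 0;
                 c * d^q + d * (-c^q), c * (-b^q) + d * a^q, 0; 0, 0, 1] := by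
          rw [hMeq, Matrix.mul_fin_three]
          ring_nf
        rw [hprod, e1, e2, e3, e4, stmt0_one_mat]
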